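/- Let F be a field and C the split Cayley algebra over F, with bilinear form ⟨c, d⟩ = N(c+d) − N(c) − N(d), and for a, b ∈ C let L_{a,b} : C → C be L_{a,b}(c) = ⟨c, a⟩·b − ⟨c, b⟩·a. Set x₀ = (E₂₁ | 0), w₀ = (0 | E₁₁), x₀' = (−E₁₂ | 0), w₀' = (0 | E₂₂). Then D_β = L_{w₀,x₀} and D_{−β} = L_{w₀',x₀'} are derivations of C: D(c·d) = D(c)·d + c·D(d) for all c, d ∈ C, for D ∈ {D_β, D_{−β}}. -/

import Mathlib

open Matrix

/-- The underlying space of the split Cayley algebra over `F`: pairs `(x | y)` of 2×2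
matrices. -/
abbrev Cayley (F : Type*) [Field F] := Matrix (Fin 2) (Fin 2) F × Matrix (Fin 2) (Fin 2) F

variable {F : Type*} [Field F]

/-- Multiplication of the split Cayley algebra. -/
def cmul (a b : Cayley F) : Cayley F :=
  (a.1 * b.1 + (b.2).adjugate * a.2, b.2 * a.1 + a.2 * (b.1).adjugate)

/-- The norm `N (x | y) = det x - det y` of the split Cayley algebra. -/
def cnorm (a : Cayley F) : F := (a.1).det - (a.2).det

/-- The bilinear form `⟨c, d⟩ = N(c+d) - N c - N d` on the split Cayley algebra. -/
def bform (c d : Cayley F) : F := cnorm (c + d) - cnorm c - cnorm d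

/-- `L_{a,b}(c) = ⟨c,a⟩·b - ⟨c,b⟩·a`. -/
def Lab (a b c : Cayley F) : Cayley F := bform c a • b - bform c b • a

set_option maxHeartbeats 4000000 in
/-- The root vectors `D_β = L_{w₀,x₀}` and `D_{−β} = L_{w₀',x₀'}`, with
`x₀ = (E₂₁|0)`, `w₀ = (0|E₁₁)`, `x₀' = (−E₁₂|0)`, `w₀' = (0|E₂₂)`, are derivations of
the split Cayley algebra. -/
theorem D_beta_derivations :
    (∀ c d : Cayley F,
      Lab ((0, single 0 0 1) : Cayley F) ((single 1 0 1, 0) : Cayley F)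
          (cmul c d) =
        cmul (Lab (0, single 0 0 1) (single 1 0 1, 0) c) d +
        cmul c (Lab (0, single 0 0 1) (single 1 0 1, 0) d)) ∧
    (∀ c d : Cayley F,
      Lab ((0, single 1 1 1) : Cayley F) ((-(single 0 1 1), 0) : Cayley F)
          (cmul c d) =
        cmul (Lab (0, single 1 1 1) (-(single 0 1 1), 0) c) d +
        cmul c (Lab (0, single 1 1 1) (-(single 0 1 1), 0) d)) := by
  constructor <;>
  · intro c d
    obtain ⟨c1, c2⟩ := c; obtain ⟨d1, d2⟩ := d
    simp only [Lab, bform, cnorm, cmul, Prod.mk_add_mk, Prod.mk.injEq, Prod.smul_mk,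
      Prod.sub_def, Prod.fst, Prod.snd]
    constructor <;>
    · ext i j
      fin_cases i <;> fin_cases j <;>
        simp [adjugate_fin_two, det_fin_two, Matrix.add_apply, Matrix.sub_apply,
          Matrix.smul_apply, Matrix.mul_apply, Fin.sum_univ_two, Matrix.single,
          Matrix.of_apply, Matrix.vecHead, Matrix.vecTail, Matrix.vecMul, dotProduct,
          Pi.smul_apply, smul_eq_mul, Matrix.neg_apply] <;> ring
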